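/- Let f : ℝ^m → ℝ^k be a surjective ℝ-linear map such that m − k is even, and let 𝔥 be a ℂ-linear subspace of ℂ^k such that Re restricted to 𝔥 is injective. Then there exists a ℂ-linear subspace 𝔥′ of ℂ^m with the following properties: (i) Re restricted to 𝔥′ is injective; (ii) the complexification f^ℂ : ℂ^m → ℂ^k of f maps 𝔥′ onto 𝔥; (iii) ker f ⊆ Re(𝔥′); and (iv) f induces an ℝ-linear isomorphism ℝ^m/Re(𝔥′) ≅ ℝ^k/Re(𝔥). -/
import Mathlib


/-- The real-part projection `ℂ^m → ℝ^m`, as an `ℝ`-linear map. -/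
noncomputable def reLinear (m : ℕ) : (Fin m → ℂ) →ₗ[ℝ] (Fin m → ℝ) :=
  LinearMap.pi fun i => Complex.reLm.comp (LinearMap.proj (R := ℝ) i)

/-- `Re(𝔥)` as a real subspace of `ℝ^m`. -/
noncomputable def reSub {m : ℕ} (𝔥 : Submodule ℂ (Fin m → ℂ)) : Submodule ℝ (Fin m → ℝ) :=
  (𝔥.restrictScalars ℝ).map (reLinear m)

/-- The complexification `f^ℂ : ℂ^m → ℂ^k` of an `ℝ`-linear map `f : ℝ^m → ℝ^k`:
`f^ℂ(u + √−1 v) = f(u) + √−1 f(v)`. -/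
noncomputable def complexify {m k : ℕ} (f : (Fin m → ℝ) →ₗ[ℝ] (Fin k → ℝ))
    (w : Fin m → ℂ) : Fin k → ℂ :=
  fun j => ((f (fun i => (w i).re)) j : ℂ) + Complex.I * ((f (fun i => (w i).im)) j : ℂ)

@[simp] lemma reLinear_apply (m : ℕ) (w : Fin m → ℂ) (i : Fin m) :
    reLinear m w i = (w i).re := rfl

noncomputable def ofRealLinear (m : ℕ) : (Fin m → ℝ) →ₗ[ℝ] (Fin m → ℂ) :=
  LinearMap.pi fun i => (Algebra.linearMap ℝ ℂ).comp (LinearMap.proj i)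

@[simp] lemma ofRealLinear_apply (m : ℕ) (v : Fin m → ℝ) (i : Fin m) :
    ofRealLinear m v i = (v i : ℂ) := rfl

noncomputable def matC {a b : ℕ} (g : (Fin a → ℝ) →ₗ[ℝ] (Fin b → ℝ)) :
    (Fin a → ℂ) →ₗ[ℂ] (Fin b → ℂ) :=
  Matrix.toLin' ((LinearMap.toMatrix' g).map (Complex.ofReal))

lemma matC_apply {a b : ℕ} (g : (Fin a → ℝ) →ₗ[ℝ] (Fin b → ℝ)) (w : Fin a → ℂ) :
    matC g w = complexify g w := by
  have hg : ∀ v : Fin a → ℝ, g v = (LinearMap.toMatrix' g).mulVec v := by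
    intro v; conv_lhs => rw [← Matrix.toLin'_toMatrix' g, Matrix.toLin'_apply]
  funext j
  simp only [matC, Matrix.toLin'_apply, complexify, hg]
  simp only [Matrix.mulVec, dotProduct, Matrix.map_apply]
  push_cast
  rw [Finset.mul_sum, ← Finset.sum_add_distrib]
  refine Finset.sum_congr rfl fun i _ => ?_
  have := Complex.re_add_im (w i)
  nth_rewrite 1 [← this]
  ring

lemma complexify_re {a b : ℕ} (g : (Fin a → ℝ) →ₗ[ℝ] (Fin b → ℝ)) (w : Fin a → ℂ) (j : Fin b) :
    (complexify g w j).re = g (fun i => (w i).re) j := by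
  simp [complexify]

lemma complexify_im {a b : ℕ} (g : (Fin a → ℝ) →ₗ[ℝ] (Fin b → ℝ)) (w : Fin a → ℂ) (j : Fin b) :
    (complexify g w j).im = g (fun i => (w i).im) j := by
  simp [complexify]

noncomputable def toComplexSub {m : ℕ} (p : Submodule ℝ (Fin m → ℂ))
    (hI : ∀ x ∈ p, Complex.I • x ∈ p) : Submodule ℂ (Fin m → ℂ) where
  carrier := p
  add_mem' := fun ha hb => p.add_mem ha hb
  zero_mem' := p.zero_mem
  smul_mem' := fun c x hx => by
    have hdecomp : c • x = c.re • x + c.im • (Complex.I • x) := by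
      funext i
      simp only [Pi.add_apply, Pi.smul_apply, smul_eq_mul, Complex.real_smul]
      apply Complex.ext <;>
        simp [Complex.add_re, Complex.add_im, Complex.mul_re, Complex.mul_im] <;> ring
    show c • x ∈ p
    rw [hdecomp]
    exact p.add_mem (p.smul_mem _ hx) (p.smul_mem _ (hI x hx))

lemma mem_toComplexSub {m : ℕ} {p : Submodule ℝ (Fin m → ℂ)} {hI} {x : Fin m → ℂ} :
    x ∈ toComplexSub p hI ↔ x ∈ p := Iff.rfl


set_option synthInstance.maxHeartbeats 1000000 in
/-- Let `f : ℝ^m → ℝ^k` be a surjective linear map with `m − k` even and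
`𝔥 ⊆ ℂ^k` a complex subspace on which `Re` is injective. Then there is a complex subspace
`𝔥′ ⊆ ℂ^m` such that: (i) `Re` is injective on `𝔥′`; (ii) `f^ℂ` maps `𝔥′` onto `𝔥`;
(iii) `ker f ⊆ Re(𝔥′)`; and (iv) `f` induces an isomorphism `ℝ^m/Re(𝔥′) ≅ ℝ^k/Re(𝔥)`
(i.e. `q ∘ f : ℝ^m → ℝ^k/Re(𝔥)` is surjective with kernel `Re(𝔥′)`). -/
theorem exists_lifted_subspace {m k : ℕ}
    (f : (Fin m → ℝ) →ₗ[ℝ] (Fin k → ℝ)) (hf : Function.Surjective f)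
    (heven : Even (m - k))
    (𝔥 : Submodule ℂ (Fin k → ℂ))
    (hre : Set.InjOn (reLinear k) (𝔥 : Set (Fin k → ℂ))) :
    ∃ 𝔥' : Submodule ℂ (Fin m → ℂ),
      Set.InjOn (reLinear m) (𝔥' : Set (Fin m → ℂ)) ∧
      complexify f '' (𝔥' : Set (Fin m → ℂ)) = (𝔥 : Set (Fin k → ℂ)) ∧
      LinearMap.ker f ≤ reSub 𝔥' ∧
      LinearMap.ker ((reSub 𝔥).mkQ.comp f) = reSub 𝔥' ∧
      Function.Surjective ((reSub 𝔥).mkQ.comp f) := by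
  classical
  obtain ⟨s, hs⟩ := f.exists_rightInverse_of_surjective (LinearMap.range_eq_top.2 hf)
  have hsv : ∀ v, f (s v) = v := fun v => by
    simpa using LinearMap.congr_fun hs v
  obtain ⟨n, hn⟩ := heven
  set K := LinearMap.ker f with hKdef
  have hfr : Module.finrank ℝ K = n + n := by
    have h1 := LinearMap.finrank_range_add_finrank_ker f
    rw [LinearMap.range_eq_top.2 hf, finrank_top] at h1
    rw [Module.finrank_pi, Fintype.card_fin, Module.finrank_pi, Fintype.card_fin, ← hKdef] at h1
    omega
  have hfr2 : Module.finrank ℝ (Fin n → ℂ) = n + n := by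
    rw [Module.finrank_pi_fintype, Finset.sum_congr rfl (fun i _ => Complex.finrank_real_complex),
      Finset.sum_const, Finset.card_fin, smul_eq_mul]
    omega
  obtain ⟨e⟩ := FiniteDimensional.nonempty_linearEquiv_of_finrank_eq (hfr.trans hfr2.symm)
  -- ρ and κ
  set ρ : (Fin n → ℂ) →ₗ[ℝ] (Fin m → ℂ) :=
    (ofRealLinear m).comp (K.subtype.comp e.symm.toLinearMap) with hρdef
  have hρ : ∀ x i, ρ x i = (((e.symm x : K) : Fin m → ℝ) i : ℂ) := fun x i => rfl
  set κ : (Fin n → ℂ) →ₗ[ℝ] (Fin m → ℂ) :=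
    ρ - Complex.I • (ρ.comp (Complex.I • (LinearMap.id (R := ℝ) (M := Fin n → ℂ)))) with hκdef
  have hκ : ∀ x, κ x = ρ x - Complex.I • ρ (Complex.I • x) := fun x => by
    simp [hκdef, LinearMap.sub_apply, LinearMap.smul_apply, LinearMap.comp_apply]
  have hκre : ∀ x i, (κ x i).re = ((e.symm x : K) : Fin m → ℝ) i := by
    intro x i
    rw [hκ]
    simp [Pi.sub_apply, Pi.smul_apply, smul_eq_mul, Complex.sub_re, Complex.mul_re, hρ]
  have hκim : ∀ x i, (κ x i).im = -(((e.symm (Complex.I • x) : K) : Fin m → ℝ) i) := by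
    intro x i
    rw [hκ]
    simp [Pi.sub_apply, Pi.smul_apply, smul_eq_mul, Complex.sub_im, Complex.mul_im, hρ]
  have hIκ : ∀ x, Complex.I • κ x = κ (Complex.I • x) := by
    intro x
    have h1 : Complex.I • (Complex.I • x) = -x := by
      rw [smul_smul, Complex.I_mul_I, neg_one_smul]
    rw [hκ, hκ, h1, map_neg, smul_sub, smul_smul, Complex.I_mul_I, neg_one_smul,
      smul_neg, sub_neg_eq_add, sub_neg_eq_add]
    abel
  set S : (Fin k → ℂ) →ₗ[ℂ] (Fin m → ℂ) := matC s with hSdef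
  have hS : ∀ h, S h = complexify s h := fun h => matC_apply s h
  set J : Submodule ℂ (Fin m → ℂ) := toComplexSub (LinearMap.range κ)
      (by rintro _ ⟨x, rfl⟩; exact ⟨Complex.I • x, (hIκ x).symm⟩) with hJdef
  have hmem : ∀ w, w ∈ 𝔥.map S ⊔ J ↔ ∃ h ∈ 𝔥, ∃ x, w = S h + κ x := by
    intro w
    rw [Submodule.mem_sup]
    constructor
    · rintro ⟨y, ⟨h, hh, rfl⟩, z, hz, rfl⟩
      obtain ⟨x, rfl⟩ := hz
      exact ⟨h, hh, x, rfl⟩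
    · rintro ⟨h, hh, x, rfl⟩
      exact ⟨S h, ⟨h, hh, rfl⟩, κ x, ⟨x, rfl⟩, rfl⟩
  have hRe : ∀ (h : Fin k → ℂ) x,
      (fun i => ((S h + κ x) i).re) = s (fun i => (h i).re) + ((e.symm x : K) : Fin m → ℝ) := by
    intro h x
    funext i
    rw [Pi.add_apply, Complex.add_re, hS, complexify_re, hκre]
    rfl
  have hIm : ∀ (h : Fin k → ℂ) x,
      (fun i => ((S h + κ x) i).im)
        = s (fun i => (h i).im) - ((e.symm (Complex.I • x) : K) : Fin m → ℝ) := by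
    intro h x
    funext i
    rw [Pi.add_apply, Complex.add_im, hS, complexify_im, hκim]
    rfl
  have hker : ∀ u : K, f (u : Fin m → ℝ) = 0 := fun u => LinearMap.mem_ker.mp u.2
  have hfC : ∀ (h : Fin k → ℂ) x, complexify f (S h + κ x) = h := by
    intro h x
    funext j
    show (↑(f (fun i => ((S h + κ x) i).re) j) : ℂ)
        + Complex.I * ↑(f (fun i => ((S h + κ x) i).im) j) = h j
    rw [hRe, hIm, map_add, map_sub, hsv, hsv, hker, hker, add_zero, sub_zero]
    rw [mul_comm Complex.I, Complex.re_add_im]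
  refine ⟨𝔥.map S ⊔ J, ?_, ?_, ?_, ?_, ?_⟩
  · -- (i) InjOn
    have hzero : ∀ w ∈ 𝔥.map S ⊔ J, reLinear m w = 0 → w = 0 := by
      intro w hw hw0
      obtain ⟨h, hh, x, rfl⟩ := (hmem w).1 hw
      have hw0' : (s (fun i => (h i).re) + ((e.symm x : K) : Fin m → ℝ)) = 0 := by
        rw [← hRe h x]; exact hw0
      have h2 : (fun i => (h i).re) = 0 := by
        have h3 := congrArg f hw0'
        rwa [map_add, hsv, hker (e.symm x), add_zero, map_zero] at h3
      have h4 : h = 0 := by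
        refine hre hh (Submodule.zero_mem _) ?_
        rw [map_zero]; exact h2
      rw [h2, map_zero, zero_add] at hw0'
      have h6 : x = 0 := by
        have h5 : e.symm x = 0 := Subtype.ext hw0'
        simpa using congrArg e h5
      rw [h4, h6, map_zero, map_zero, add_zero]
    intro w1 hw1 w2 hw2 hww
    have hsub : w1 - w2 ∈ 𝔥.map S ⊔ J := Submodule.sub_mem _ hw1 hw2
    have h0 : reLinear m (w1 - w2) = 0 := by rw [map_sub, hww, sub_self]
    exact sub_eq_zero.mp (hzero _ hsub h0)
  · -- (ii) image
    ext y
    constructor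
    · rintro ⟨w, hw, rfl⟩
      obtain ⟨h, hh, x, rfl⟩ := (hmem w).1 hw
      rw [hfC h x]; exact hh
    · intro hy
      exact ⟨S y + κ 0, (hmem _).2 ⟨y, hy, 0, rfl⟩, hfC y 0⟩
  · -- (iii) ker f ≤ reSub 𝔥'
    intro u hu
    refine Submodule.mem_map.2 ⟨κ (e ⟨u, hu⟩), ?_, ?_⟩
    · exact (hmem _).2 ⟨0, 𝔥.zero_mem, e ⟨u, hu⟩, by rw [map_zero, zero_add]⟩
    · funext i
      rw [reLinear_apply, hκre, e.symm_apply_apply]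
  · -- (iv) kernel of mkQ ∘ f
    ext v
    rw [LinearMap.mem_ker, LinearMap.comp_apply, Submodule.mkQ_apply,
      Submodule.Quotient.mk_eq_zero]
    constructor
    · intro hv
      obtain ⟨h, hh, hhv⟩ := Submodule.mem_map.1 hv
      have hxk : v - s (f v) ∈ K := by
        rw [hKdef, LinearMap.mem_ker, map_sub, hsv, sub_self]
      refine Submodule.mem_map.2 ⟨S h + κ (e ⟨v - s (f v), hxk⟩), ?_, ?_⟩
      · exact (hmem _).2 ⟨h, hh, _, rfl⟩
      · have h9 : reLinear m (S h + κ (e ⟨v - s (f v), hxk⟩))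
            = s (fun i => (h i).re)
              + ((e.symm (e ⟨v - s (f v), hxk⟩) : K) : Fin m → ℝ) := hRe h _
        have h10 : ((e.symm (e ⟨v - s (f v), hxk⟩) : K) : Fin m → ℝ) = v - s (f v) := by
          rw [e.symm_apply_apply]
        have hhv' : (fun i => (h i).re) = f v := hhv
        rw [h9, h10, hhv']
        abel
    · intro hv
      obtain ⟨w, hw, rfl⟩ := Submodule.mem_map.1 hv
      obtain ⟨h, hh, x, rfl⟩ := (hmem w).1 hw
      have h9 : reLinear m (S h + κ x)
          = s (fun i => (h i).re) + ((e.symm x : K) : Fin m → ℝ) := hRe h x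
      rw [h9, map_add, hsv, hker (e.symm x), add_zero]
      exact Submodule.mem_map.2 ⟨h, hh, rfl⟩
  · -- (v) surjectivity
    intro q
    obtain ⟨y, hy⟩ := Submodule.mkQ_surjective (reSub 𝔥) q
    obtain ⟨v, rfl⟩ := hf y
    exact ⟨v, hy⟩
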